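/- arXiv:math/0406260 — 2 statements merged into one kernel-verified Lean document; each statement's English description precedes it below -/
import Mathlib

section
/- Let N ≥ 1, let D ⊆ ℕᴺ be a finite nonempty set, let L, L₀ : ℝᴺ → ℝ be linear forms, and let τ be a linear (total) order on ℕᴺ. For a linear form Λ : ℝᴺ → ℝ, let ≺_Λ denote the total order on ℕᴺ defined by: m ≺_Λ m′ if and only if Λ(m) < Λ(m′), or Λ(m) = Λ(m′) and m is τ-smaller than m′. Let e ∈ D and assume that for every real ε with 0 < ε ≤ 1, e is the greatest element of D for the order ≺_{(1−ε)L+εL₀}. Set D^L = {m ∈ D : L(m) = max_{m′∈D} L(m′)}. Then e ∈ D^L, and e is the greatest element of D^L for the order ≺_{L₀}. -/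
/-- The canonical embedding of `ℕᴺ` into `ℝᴺ`. -/
def natCast (N : ℕ) (m : Fin N → ℕ) : Fin N → ℝ := fun i => (m i : ℝ)

/-- For a linear form `Λ : ℝᴺ → ℝ` and a (tie-breaking) linear order `τ` on `ℕᴺ`, the
strict order `≺_Λ` on `ℕᴺ`: compare `Λ` first and break ties with `τ`. -/
def precLt (N : ℕ) (τ : LinearOrder (Fin N → ℕ)) (Λ : (Fin N → ℝ) →ₗ[ℝ] ℝ)
    (m m' : Fin N → ℕ) : Prop :=
  Λ (natCast N m) < Λ (natCast N m') ∨
    (Λ (natCast N m) = Λ (natCast N m') ∧ τ.lt m m')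

/-- the combinatorial content of the Proposition of Section 2.
If `e ∈ D` is the greatest element of the finite set `D ⊆ ℕᴺ` for the order
`≺_{(1-ε)L + εL₀}` for every `0 < ε ≤ 1`, then `e` belongs to
`D^L = {m ∈ D : L(m) = max_{m'∈D} L(m')}` and `e` is the greatest element of `D^L`
for the order `≺_{L₀}`. -/
theorem greatest_of_perturbed_greatest (N : ℕ) (hN : 1 ≤ N)
    (D : Finset (Fin N → ℕ)) (hD : D.Nonempty)
    (L L₀ : (Fin N → ℝ) →ₗ[ℝ] ℝ) (τ : LinearOrder (Fin N → ℕ))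
    (e : Fin N → ℕ) (he : e ∈ D)
    (hmax : ∀ ε : ℝ, 0 < ε → ε ≤ 1 → ∀ m ∈ D, m ≠ e →
      precLt N τ ((1 - ε) • L + ε • L₀) m e) :
    (∀ m' ∈ D, L (natCast N m') ≤ L (natCast N e)) ∧
    (∀ m ∈ D, (∀ m' ∈ D, L (natCast N m') ≤ L (natCast N m)) → m ≠ e →
      precLt N τ L₀ m e) := by
  have h1 : ∀ m' ∈ D, L (natCast N m') ≤ L (natCast N e) := by
    intro m hm
    by_cases hme : m = e
    · simp [hme]
    · set a : ℝ := L (natCast N e) - L (natCast N m) with ha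
      set c : ℝ := L₀ (natCast N e) - L₀ (natCast N m) with hc
      have key : ∀ ε : ℝ, 0 < ε → ε ≤ 1 → 0 ≤ (1 - ε) * a + ε * c := by
        intro ε hε0 hε1
        rcases hmax ε hε0 hε1 m hm hme with h | ⟨h, _⟩
        · simp only [LinearMap.add_apply, LinearMap.smul_apply, smul_eq_mul] at h
          nlinarith [h]
        · simp only [LinearMap.add_apply, LinearMap.smul_apply, smul_eq_mul] at h
          nlinarith [h]
      have : 0 ≤ a := by
        by_contra hcon
        push_neg at hcon
        set M : ℝ := |c - a| + 1 with hM
        have hM0 : 0 < M := by positivity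
        set ε : ℝ := min 1 (-a / (2 * M)) with hε
        have hε0 : 0 < ε := by
          exact lt_min one_pos (div_pos (by linarith) (by positivity))
        have hε1 : ε ≤ 1 := min_le_left _ _
        have hεle : ε ≤ -a / (2 * M) := min_le_right _ _
        have habs : c - a ≤ |c - a| := le_abs_self _
        have hk := key ε hε0 hε1
        have h2 : ε * (c - a) ≤ ε * M := by
          apply mul_le_mul_of_nonneg_left _ hε0.le
          nlinarith
        have h3 : ε * M ≤ (-a / (2 * M)) * M :=
          mul_le_mul_of_nonneg_right hεle hM0.le
        have h4 : (-a / (2 * M)) * M = -a / 2 := by field_simp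
        nlinarith
      linarith
  refine ⟨h1, fun m hm _ hme => ?_⟩
  have := hmax 1 one_pos le_rfl m hm hme
  simpa [precLt, sub_self] using this
end

section
/- Let k be a field, N ≥ 1, and let I be a nonzero ideal of the polynomial ring k[x₁,…,x_N]. Let ≺₁ and ≺₂ be two monomial orders on ℕᴺ. For a monomial order ≺ and a nonzero polynomial f, write exp_≺(f) ∈ ℕᴺ for the ≺-greatest element of the support of f, and set Exp_≺(I) = { exp_≺(f) : f ∈ I, f ≠ 0 }. Let G = {g₁,…,g_r} ⊆ I ∖ {0} be the minimal reduced Gröbner (standard) basis of I with respect to ≺₁, that is: each g_j has ≺₁-leading coefficient 1; Exp_{≺₁}(I) = ⋃_{j=1}^{r} ( exp_{≺₁}(g_j) + ℕᴺ ); for i ≠ j, exp_{≺₁}(g_j) ∉ exp_{≺₁}(g_i) + ℕᴺ (minimality); and every element of the support of g_j other than exp_{≺₁}(g_j) lies outside Exp_{≺₁}(I) (reducedness). Assume that exp_{≺₁}(g_j) = exp_{≺₂}(g_j) for every j = 1, …, r. Then G is also the minimal reduced Gröbner basis of I with respect to ≺₂; in particular Exp_{≺₂}(I) = ⋃_{j=1}^{r}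 ( exp_{≺₂}(g_j) + ℕᴺ ). -/
/-- A monomial order on `ℕᴺ` (monomials indexed by exponent vectors `Fin N →₀ ℕ`):
a linear order compatible with addition for which `0` is the smallest element. -/
structure MonOrder (N : ℕ) where
  lin : LinearOrder (Fin N →₀ ℕ)
  add_le_add_right : ∀ a b c : Fin N →₀ ℕ, lin.le a b → lin.le (a + c) (b + c)
  zero_le : ∀ a : Fin N →₀ ℕ, lin.le 0 a

/-- `e` is the `ord`-leading exponent of the polynomial `f`: it belongs to the support
of `f` and is the `ord`-greatest element of the support. -/
def IsExp {k : Type*} [Field k] {N : ℕ} (ord : MonOrder N)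
    (f : MvPolynomial (Fin N) k) (e : Fin N →₀ ℕ) : Prop :=
  e ∈ f.support ∧ ∀ m ∈ f.support, ord.lin.le m e

/-- `Exp_ord(I)`: the set of `ord`-leading exponents of the nonzero elements of `I`. -/
def ExpSet {k : Type*} [Field k] {N : ℕ} (ord : MonOrder N)
    (I : Ideal (MvPolynomial (Fin N) k)) : Set (Fin N →₀ ℕ) :=
  {e | ∃ f ∈ I, f ≠ 0 ∧ IsExp ord f e}


section Aux

variable {k : Type*} [Field k] {N : ℕ}

open MvPolynomial

/-- The order of a monomial order refines divisibility. -/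
lemma MonOrder.le_of_exists_add (ord : MonOrder N) {a b : Fin N →₀ ℕ}
    (h : ∃ d, b = a + d) : ord.lin.le a b := by
  obtain ⟨d, rfl⟩ := h
  have h2 := ord.add_le_add_right 0 d a (ord.zero_le d)
  rwa [zero_add, add_comm d a] at h2

/-- A monomial order is well-founded (Dickson's lemma). -/
lemma MonOrder.wf (ord : MonOrder N) :
    WellFounded (fun a b : Fin N →₀ ℕ => ord.lin.lt a b) := by
  have hPWO : (Set.univ : Set (Fin N →₀ ℕ)).IsPWO := Set.isPWO_of_wellQuasiOrderedLE _
  have hPWO2 : (Set.univ : Set (Fin N →₀ ℕ)).PartiallyWellOrderedOn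
      (fun a b => ord.lin.le a b) := by
    refine Set.partiallyWellOrderedOn_iff_exists_lt.mpr fun f hf => ?_
    obtain ⟨m, n, hmn, hle⟩ := hPWO.exists_lt hf
    refine ⟨m, n, hmn, ord.le_of_exists_add ?_⟩
    exact le_iff_exists_add.mp hle
  haveI : IsPreorder (Fin N →₀ ℕ) (fun a b => ord.lin.le a b) :=
    { refl := ord.lin.le_refl, trans := ord.lin.le_trans }
  have hWF := hPWO2.wellFoundedOn
  rw [Set.wellFoundedOn_univ] at hWF
  refine Subrelation.wf (r := fun a b => ord.lin.le a b ∧ ¬ ord.lin.le b a) ?_ hWF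
  intro a b hab
  exact (ord.lin.lt_iff_le_not_ge a b).mp hab

lemma exists_isExp (ord : MonOrder N) {f : MvPolynomial (Fin N) k} (hf : f ≠ 0) :
    ∃ e, IsExp ord f e := by
  have hne : f.support.Nonempty := MvPolynomial.support_nonempty.mpr hf
  obtain ⟨e, he, hmax⟩ :=
    @Finset.exists_max_image (Fin N →₀ ℕ) (Fin N →₀ ℕ) ord.lin f.support id hne
  exact ⟨e, he, hmax⟩

lemma isExp_unique (ord : MonOrder N) {f : MvPolynomial (Fin N) k} {e e' : Fin N →₀ ℕ}
    (h : IsExp ord f e) (h' : IsExp ord f e') : e = e' :=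
  ord.lin.le_antisymm _ _ (h'.2 e h.1) (h.2 e' h'.1)

lemma isExp_monomial_mul (ord : MonOrder N) {f : MvPolynomial (Fin N) k} {e : Fin N →₀ ℕ}
    (h : IsExp ord f e) (d : Fin N →₀ ℕ) {c : k} (hc : c ≠ 0) :
    IsExp ord (monomial d c * f) (d + e) := by
  constructor
  · rw [mem_support_iff, coeff_monomial_mul]
    exact mul_ne_zero hc (mem_support_iff.mp h.1)
  · intro m hm
    classical
    have hsub := support_mul (monomial d c) f hm
    rw [support_monomial, if_neg hc] at hsub
    obtain ⟨b, hb, c', hc', rfl⟩ := Finset.mem_add.mp hsub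
    rw [Finset.mem_singleton] at hb
    subst hb
    have h2 := ord.add_le_add_right c' e b (h.2 c' hc')
    rwa [add_comm c' b, add_comm e b] at h2

end Aux

open MvPolynomial in
/-- Key lemma: the `ord₂`-leading exponent of any nonzero element of `I` is divisible by
some `e j`. Proved by well-founded induction along `ord₁`, reducing by the basis. -/
lemma key_exp_mem {k : Type*} [Field k] {N : ℕ}
    {I : Ideal (MvPolynomial (Fin N) k)}
    {ord₁ ord₂ : MonOrder N} {r : ℕ}
    {g : Fin r → MvPolynomial (Fin N) k} {e : Fin r → (Fin N →₀ ℕ)}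
    (hgI : ∀ j, g j ∈ I)
    (hexp1 : ∀ j, IsExp ord₁ (g j) (e j))
    (hlc : ∀ j, MvPolynomial.coeff (e j) (g j) = 1)
    (hgen : ExpSet ord₁ I = ⋃ j, {m | ∃ d, m = e j + d})
    (hexp2 : ∀ j, IsExp ord₂ (g j) (e j)) :
    ∀ a : Fin N →₀ ℕ, ∀ f ∈ I, f ≠ 0 → IsExp ord₁ f a →
      ∀ e', IsExp ord₂ f e' → ∃ j d, e' = e j + d := by
  classical
  intro a
  induction a using (ord₁.wf).induction with
  | _ a IH =>
    intro f hfI hf0 hexpa e' hexpe'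
    -- `a` is an `ord₁`-leading exponent of an element of `I`, hence divisible by some `e j`
    have haS : a ∈ ExpSet ord₁ I := ⟨f, hfI, hf0, hexpa⟩
    rw [hgen, Set.mem_iUnion] at haS
    obtain ⟨j, d, had⟩ := haS
    set c := MvPolynomial.coeff a f with hcdef
    have hc : c ≠ 0 := MvPolynomial.mem_support_iff.mp hexpa.1
    set t : MvPolynomial (Fin N) k := monomial d c * g j with htdef
    have hde : d + e j = a := by rw [had, add_comm]
    have hexpt1 : IsExp ord₁ t a := hde ▸ isExp_monomial_mul ord₁ (hexp1 j) d hc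
    have hexpt2 : IsExp ord₂ t a := hde ▸ isExp_monomial_mul ord₂ (hexp2 j) d hc
    set h : MvPolynomial (Fin N) k := f - t with hhdef
    have hhI : h ∈ I := I.sub_mem hfI (I.mul_mem_left _ (hgI j))
    have hcoefft : MvPolynomial.coeff a t = c := by
      rw [htdef, ← hde, MvPolynomial.coeff_monomial_mul, hlc j, mul_one]
    have hcoeffh : MvPolynomial.coeff a h = 0 := by
      rw [hhdef, MvPolynomial.coeff_sub, hcoefft, sub_self]
    have hfht : f = h + t := by rw [hhdef]; ring
    have ha_supf : a ∈ f.support := hexpa.1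
    by_cases hh0 : h = 0
    · -- f = t, so e' = a
      have hft : f = t := by rw [hfht, hh0, zero_add]
      have he'a : e' = a := isExp_unique ord₂ hexpe' (hft ▸ hexpt2)
      exact ⟨j, d, he'a.trans had⟩
    · obtain ⟨b, hexpb⟩ := exists_isExp ord₁ hh0
      -- b ≺₁ a
      have hleba : ord₁.lin.le b a := by
        have hbmem : b ∈ f.support ∪ t.support := by
          have : h.support ⊆ f.support ∪ t.support := by
            rw [hhdef]; exact MvPolynomial.support_sub _ _ _
          exact this hexpb.1
        rcases Finset.mem_union.mp hbmem with hb | hb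
        · exact hexpa.2 b hb
        · exact hexpt1.2 b hb
      have hba_ne : b ≠ a := by
        intro hba
        exact MvPolynomial.mem_support_iff.mp hexpb.1 (hba ▸ hcoeffh)
      have hlt : ord₁.lin.lt b a := (ord₁.lin.lt_iff_le_not_ge b a).mpr
        ⟨hleba, fun hab => hba_ne (ord₁.lin.le_antisymm _ _ hleba hab)⟩
      have IH' := IH b hlt h hhI hh0 hexpb
      obtain ⟨M', hM'⟩ := exists_isExp ord₂ hh0
      -- where does e' live?
      have hsupf : f.support ⊆ h.support ∪ t.support := by
        rw [hfht]; exact MvPolynomial.support_add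
      rcases Finset.mem_union.mp (hsupf hexpe'.1) with he' | he'
      · -- e' ∈ supp h
        have hle1 : ord₂.lin.le e' M' := hM'.2 e' he'
        have hM'mem : M' ∈ f.support ∪ t.support := by
          have : h.support ⊆ f.support ∪ t.support := by
            rw [hhdef]; exact MvPolynomial.support_sub _ _ _
          exact this hM'.1
        rcases Finset.mem_union.mp hM'mem with hM'f | hM't
        · -- M' ∈ supp f : e' = M'
          have : e' = M' := ord₂.lin.le_antisymm _ _ hle1 (hexpe'.2 M' hM'f)
          exact this ▸ IH' M' hM'
        · -- M' ∈ supp t : e' = a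
          have hle2 : ord₂.lin.le M' a := hexpt2.2 M' hM't
          have hle3 : ord₂.lin.le a e' := hexpe'.2 a ha_supf
          have : e' = a := ord₂.lin.le_antisymm _ _
            (ord₂.lin.le_trans _ _ _ hle1 hle2) hle3
          exact ⟨j, d, this.trans had⟩
      · -- e' ∈ supp t : e' = a
        have hle1 : ord₂.lin.le e' a := hexpt2.2 e' he'
        have hle2 : ord₂.lin.le a e' := hexpe'.2 a ha_supf
        have : e' = a := ord₂.lin.le_antisymm _ _ hle1 hle2
        exact ⟨j, d, this.trans had⟩

/-- commutative polynomial version of Lemma 1 of the paper: if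
`g₁, …, g_r` is the minimal reduced Gröbner basis of a nonzero ideal `I` w.r.t. a
monomial order `≺₁`, with leading exponents `e₁, …, e_r`, and if the `≺₂`-leading
exponents of the `g_j` coincide with their `≺₁`-leading exponents, then `g₁, …, g_r`
is also the minimal reduced Gröbner basis of `I` w.r.t. `≺₂`; in particular
`Exp_{≺₂}(I) = ⋃_j (e_j + ℕᴺ)`. -/
theorem minimal_reduced_groebner_basis_of_eq_exponents
    {k : Type*} [Field k] (N : ℕ) (hN : 1 ≤ N)
    (I : Ideal (MvPolynomial (Fin N) k)) (hI : I ≠ ⊥)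
    (ord₁ ord₂ : MonOrder N) (r : ℕ)
    (g : Fin r → MvPolynomial (Fin N) k) (e : Fin r → (Fin N →₀ ℕ))
    (hgI : ∀ j, g j ∈ I) (hg0 : ∀ j, g j ≠ 0)
    (hexp1 : ∀ j, IsExp ord₁ (g j) (e j))
    (hlc : ∀ j, MvPolynomial.coeff (e j) (g j) = 1)
    (hgen : ExpSet ord₁ I = ⋃ j, {m | ∃ d, m = e j + d})
    (hmin : ∀ i j, i ≠ j → ¬ ∃ d, e j = e i + d)
    (hred : ∀ j, ∀ m ∈ (g j).support, m ≠ e j → m ∉ ExpSet ord₁ I)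
    (hexp2 : ∀ j, IsExp ord₂ (g j) (e j)) :
    (∀ j, MvPolynomial.coeff (e j) (g j) = 1) ∧
    (ExpSet ord₂ I = ⋃ j, {m | ∃ d, m = e j + d}) ∧
    (∀ i j, i ≠ j → ¬ ∃ d, e j = e i + d) ∧
    (∀ j, ∀ m ∈ (g j).support, m ≠ e j → m ∉ ExpSet ord₂ I) := by
    classical
  have hkey := key_exp_mem hgI hexp1 hlc hgen hexp2
  have hExp2 : ExpSet ord₂ I = ⋃ j, {m | ∃ d, m = e j + d} := by
    ext m
    constructor
    · rintro ⟨f, hfI, hf0, hexp⟩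
      obtain ⟨a, hexpa⟩ := exists_isExp ord₁ hf0
      obtain ⟨j, d, hm⟩ := hkey a f hfI hf0 hexpa m hexp
      exact Set.mem_iUnion.mpr ⟨j, d, hm⟩
    · intro hm
      obtain ⟨j, d, rfl⟩ := Set.mem_iUnion.mp hm
      refine ⟨MvPolynomial.monomial d 1 * g j, I.mul_mem_left _ (hgI j), ?_, ?_⟩
      · intro h0
        have := MvPolynomial.coeff_monomial_mul (e j) d (1 : k) (g j)
        rw [h0, MvPolynomial.coeff_zero, hlc j, mul_one] at this
        exact one_ne_zero this.symm
      · have := isExp_monomial_mul ord₂ (hexp2 j) d (one_ne_zero (α := k))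
        rwa [add_comm d (e j)] at this
  refine ⟨hlc, hExp2, hmin, ?_⟩
  intro j m hm hme
  rw [hExp2, ← hgen]
  exact hred j m hm hme
end
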